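/- Let n ≥ 2, 2 ≤ k ≤ n, and let λ = (λ_1, …, λ_n) ∈ Γ_+ (i.e. λ_i > 0 for all i). Then σ_1(λ)/(k(k−1)) − kσ_k(λ)/((k−1)σ_{k−1}(λ)) + (k+1)σ_{k+1}(λ)/(kσ_k(λ)) ≥ 0, and equality holds if and only if λ_1 = λ_2 = ⋯ = λ_n. -/

import Mathlib

open Finset



namespace ESAux

variable {n : ℕ} (lam : Fin n → ℝ)

noncomputable def E (A : Finset (Fin n)) (j : ℕ) : ℝ :=
  ∑ s ∈ A.powersetCard j, ∏ i ∈ s, lam i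

lemma E_zero (A : Finset (Fin n)) : E lam A 0 = 1 := by simp [E]

lemma E_nonneg (hpos : ∀ i, 0 < lam i) (A : Finset (Fin n)) (j : ℕ) : 0 ≤ E lam A j :=
  Finset.sum_nonneg fun s _ => Finset.prod_nonneg fun i _ => (hpos i).le

lemma E_pos (hpos : ∀ i, 0 < lam i) {A : Finset (Fin n)} {j : ℕ} (h : j ≤ A.card) :
    0 < E lam A j := by
  obtain ⟨t, hts, htc⟩ := Finset.exists_subset_card_eq h
  exact Finset.sum_pos (fun s _ => Finset.prod_pos fun i _ => hpos i)
    ⟨t, Finset.mem_powersetCard.2 ⟨hts, htc⟩⟩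

lemma E_eq_zero {A : Finset (Fin n)} {j : ℕ} (h : A.card < j) : E lam A j = 0 := by
  simp [E, Finset.powersetCard_eq_empty.2 h]

lemma E_insert {x : Fin n} {A : Finset (Fin n)} (hx : x ∉ A) (j : ℕ) :
    E lam (insert x A) (j + 1) = E lam A (j + 1) + lam x * E lam A j := by
  unfold E
  rw [Finset.powersetCard_succ_insert hx, Finset.sum_union, Finset.sum_image]
  · rw [Finset.mul_sum]
    congr 1
    apply Finset.sum_congr rfl
    intro s hs
    exact Finset.prod_insert fun hxs => hx ((Finset.mem_powersetCard.1 hs).1 hxs)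
  · intro a ha b hb hab
    have hxa : x ∉ a := fun h => hx ((Finset.mem_powersetCard.1 ha).1 h)
    have hxb : x ∉ b := fun h => hx ((Finset.mem_powersetCard.1 hb).1 h)
    rw [← Finset.erase_insert hxa, ← Finset.erase_insert hxb, hab]
  · rw [Finset.disjoint_right]
    rintro s hs hs'
    obtain ⟨a, _, rfl⟩ := Finset.mem_image.1 hs
    exact hx ((Finset.mem_powersetCard.1 hs').1 (Finset.mem_insert_self x a))

lemma DI (A : Finset (Fin n)) (j : ℕ) :
    ∑ i ∈ A, lam i * E lam (A.erase i) j = ((j : ℝ) + 1) * E lam A (j + 1) := by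
  have h1 : ((j : ℝ) + 1) * E lam A (j + 1)
      = ∑ t ∈ Finset.powersetCard (j + 1) A, ∑ _i ∈ t, ∏ l ∈ t, lam l := by
    rw [E, Finset.mul_sum]
    apply Finset.sum_congr rfl
    intro t ht
    rw [Finset.sum_const, (Finset.mem_powersetCard.1 ht).2, nsmul_eq_mul]
    push_cast
    ring
  have h2 : ∑ t ∈ Finset.powersetCard (j + 1) A, ∑ _i ∈ t, ∏ l ∈ t, lam l
      = ∑ i ∈ A, ∑ t ∈ (Finset.powersetCard (j + 1) A).filter (fun t => i ∈ t),
          ∏ l ∈ t, lam l := by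
    apply Finset.sum_comm'
    intro t i
    simp only [Finset.mem_filter]
    constructor
    · rintro ⟨ht, hit⟩
      exact ⟨⟨ht, hit⟩, (Finset.mem_powersetCard.1 ht).1 hit⟩
    · rintro ⟨⟨ht, hit⟩, _⟩
      exact ⟨ht, hit⟩
  rw [h1, h2]
  apply Finset.sum_congr rfl
  intro i hi
  rw [E, Finset.mul_sum]
  refine Finset.sum_nbij' (fun s => insert i s) (fun t => t.erase i) ?_ ?_ ?_ ?_ ?_
  · intro s hs
    obtain ⟨hsub, hcard⟩ := Finset.mem_powersetCard.1 hs
    have his : i ∉ s := fun h => (Finset.mem_erase.1 (hsub h)).1 rfl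
    refine Finset.mem_filter.2 ⟨Finset.mem_powersetCard.2 ⟨?_, ?_⟩, Finset.mem_insert_self _ _⟩
    · exact Finset.insert_subset hi (hsub.trans (Finset.erase_subset _ _))
    · rw [Finset.card_insert_of_notMem his, hcard]
  · intro t ht
    obtain ⟨ht, hit⟩ := Finset.mem_filter.1 ht
    obtain ⟨hsub, hcard⟩ := Finset.mem_powersetCard.1 ht
    refine Finset.mem_powersetCard.2 ⟨Finset.erase_subset_erase _ hsub, ?_⟩
    rw [Finset.card_erase_of_mem hit, hcard]
    omega
  · intro s hs
    exact Finset.erase_insert fun h =>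
      (Finset.mem_erase.1 ((Finset.mem_powersetCard.1 hs).1 h)).1 rfl
  · intro t ht
    exact Finset.insert_erase (Finset.mem_filter.1 ht).2
  · intro s hs
    have his : i ∉ s := fun h =>
      (Finset.mem_erase.1 ((Finset.mem_powersetCard.1 hs).1 h)).1 rfl
    exact (Finset.prod_insert his).symm

lemma cross_of (hpos : ∀ i, 0 < lam i) {A : Finset (Fin n)}
    (h : ∀ j, E lam A j * E lam A (j + 2) ≤ E lam A (j + 1) ^ 2) (j : ℕ) :
    E lam A j * E lam A (j + 3) ≤ E lam A (j + 1) * E lam A (j + 2) := by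
  have hnn := E_nonneg lam hpos A
  rcases le_or_gt (j + 2) A.card with hle | hlt
  · have hx1 : 0 < E lam A (j + 1) := E_pos lam hpos (by omega)
    have hx2 : 0 < E lam A (j + 2) := E_pos lam hpos hle
    have h1 := h j
    have h2 := h (j + 1)
    nlinarith [mul_pos hx1 hx2, hnn j, hnn (j + 3),
      mul_le_mul h1 h2 (mul_nonneg (hnn (j + 1)) (hnn (j + 3))) (sq_nonneg _)]
  · have h3 : E lam A (j + 3) = 0 := E_eq_zero lam (by omega)
    rw [h3, mul_zero]
    exact mul_nonneg (hnn (j + 1)) (hnn (j + 2))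

set_option maxHeartbeats 800000 in
lemma newton (hpos : ∀ i, 0 < lam i) (A : Finset (Fin n)) :
    ∀ j, E lam A j * E lam A (j + 2) ≤ E lam A (j + 1) ^ 2 := by
  classical
  induction A using Finset.induction_on with
  | empty =>
    intro j
    have h2 : E lam ∅ (j + 2) = 0 := E_eq_zero lam (by simp)
    rw [h2, mul_zero]
    exact sq_nonneg _
  | @insert x A hx ih =>
    have hnn := E_nonneg lam hpos A
    intro j
    cases j with
    | zero =>
      rw [E_zero, E_insert lam hx 0, E_insert lam hx 1, E_zero]
      have h := ih 0
      rw [E_zero] at h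
      nlinarith [hpos x, hnn 1]
    | succ m =>
      rw [E_insert lam hx m, E_insert lam hx (m + 1), E_insert lam hx (m + 2)]
      nlinarith [ih m, ih (m + 1), cross_of lam hpos ih m, hpos x, hnn m, hnn (m + 1),
        hnn (m + 2), hnn (m + 3), mul_pos (hpos x) (hpos x)]

set_option maxHeartbeats 800000 in
lemma newton_strict (hpos : ∀ i, 0 < lam i) (A : Finset (Fin n)) :
    ∀ j, j + 1 ≤ A.card → E lam A j * E lam A (j + 2) < E lam A (j + 1) ^ 2 := by
  classical
  induction A using Finset.induction_on with
  | empty =>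
    intro j hj
    simp at hj
  | @insert x A hx ih =>
    intro j hj
    have hnn := E_nonneg lam hpos A
    have hw := newton lam hpos A
    cases j with
    | zero =>
      rw [E_zero, E_insert lam hx 0, E_insert lam hx 1, E_zero]
      have h := hw 0
      rw [E_zero] at h
      nlinarith [hpos x, hnn 1]
    | succ m =>
      have hm : m + 1 ≤ A.card := by
        rw [Finset.card_insert_of_notMem hx] at hj
        omega
      rw [E_insert lam hx m, E_insert lam hx (m + 1), E_insert lam hx (m + 2)]
      nlinarith [hw m, hw (m + 1), cross_of lam hpos hw m, ih m hm, hpos x, hnn m, hnn (m + 1),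
        hnn (m + 2), hnn (m + 3), mul_pos (hpos x) (hpos x)]

end ESAux


/-- The `k`-th elementary symmetric polynomial of `lam : Fin n → ℝ`;
by convention `esymm 0 lam = 1` and `esymm k lam = 0` for `k > n`. -/
noncomputable def esymm {n : ℕ} (k : ℕ) (lam : Fin n → ℝ) : ℝ :=
  ∑ s ∈ Finset.univ.powersetCard k, ∏ i ∈ s, lam i

set_option maxHeartbeats 1000000 in
theorem stmt_0 (n k : ℕ) (hn : 2 ≤ n) (hk : 2 ≤ k) (hkn : k ≤ n)
    (lam : Fin n → ℝ) (hpos : ∀ i, 0 < lam i) :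
    0 ≤ esymm 1 lam / ((k : ℝ) * ((k : ℝ) - 1))
        - (k : ℝ) * esymm k lam / (((k : ℝ) - 1) * esymm (k - 1) lam)
        + ((k : ℝ) + 1) * esymm (k + 1) lam / ((k : ℝ) * esymm k lam)
    ∧ (esymm 1 lam / ((k : ℝ) * ((k : ℝ) - 1))
        - (k : ℝ) * esymm k lam / (((k : ℝ) - 1) * esymm (k - 1) lam)
        + ((k : ℝ) + 1) * esymm (k + 1) lam / ((k : ℝ) * esymm k lam) = 0
      ↔ ∀ i j, lam i = lam j) := by
  classical
  obtain ⟨m, rfl⟩ : ∃ m, k = m + 2 := ⟨k - 2, by omega⟩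
  have hcard : (Finset.univ : Finset (Fin n)).card = n := by simp
  set s0 : ℕ → ℝ := fun j => ESAux.E lam (univ : Finset (Fin n)) j with hs0def
  set f : Fin n → ℕ → ℝ := fun i j => ESAux.E lam ((univ : Finset (Fin n)).erase i) j
    with hfdef
  have hes1 : esymm 1 lam = s0 1 := rfl
  have hes2 : esymm (m + 2) lam = s0 (m + 2) := rfl
  have hes3 : esymm (m + 2 - 1) lam = s0 (m + 1) := rfl
  have hes4 : esymm (m + 2 + 1) lam = s0 (m + 3) := rfl
  have hcerase : ∀ i : Fin n, ((univ : Finset (Fin n)).erase i).card = n - 1 := fun i => by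
    rw [Finset.card_erase_of_mem (Finset.mem_univ i), hcard]
  have hpm1 : 0 < s0 (m + 1) := by
    rw [hs0def]; exact ESAux.E_pos lam hpos (by omega)
  have hpm2 : 0 < s0 (m + 2) := by
    rw [hs0def]; exact ESAux.E_pos lam hpos (by omega)
  have hsplit : ∀ (i : Fin n) (j : ℕ), s0 (j + 1) = f i (j + 1) + lam i * f i j := by
    intro i j
    simp only [hs0def, hfdef]
    have := ESAux.E_insert lam (Finset.notMem_erase i (univ : Finset (Fin n))) j
    rwa [Finset.insert_erase (Finset.mem_univ i)] at this
  have hDI : ∀ j : ℕ, (∑ i : Fin n, lam i * f i j) = ((j : ℝ) + 1) * s0 (j + 1) := by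
    intro j
    simp only [hs0def, hfdef]
    exact ESAux.DI lam univ j
  have hs01 : s0 1 = ∑ i : Fin n, lam i := by
    have h := hDI 0
    simp only [hfdef, ESAux.E_zero, mul_one, Nat.cast_zero, zero_add, one_mul] at h
    exact h.symm
  have hS : ∀ j : ℕ, s0 1 * s0 (j + 1)
      = ((j : ℝ) + 2) * s0 (j + 2) + ∑ i : Fin n, lam i ^ 2 * f i j := by
    intro j
    have e1 : s0 1 * s0 (j + 1) = ∑ i : Fin n, (lam i * f i (j + 1) + lam i ^ 2 * f i j) := by
      rw [hs01, Finset.sum_mul]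
      apply Finset.sum_congr rfl
      intro i _
      rw [hsplit i j]
      ring
    rw [e1, Finset.sum_add_distrib, hDI (j + 1)]
    simp only [show j + 1 + 1 = j + 2 from rfl]
    push_cast
    ring
  set F : Fin n → Fin n → ℝ := fun i j => f i (m + 1) * f j m - f i m * f j (m + 1) with hFdef
  set N : ℝ := ∑ i : Fin n, ∑ j : Fin n, lam i * lam j ^ 2 * F i j with hNdef
  clear_value N F f s0
  have hNval : N = ((((m : ℝ) + 2) * s0 (m + 2)) * (s0 1 * s0 (m + 1) - ((m : ℝ) + 2) * s0 (m + 2))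
      - (((m : ℝ) + 1) * s0 (m + 1)) * (s0 1 * s0 (m + 2) - ((m : ℝ) + 3) * s0 (m + 3))) := by
    have hA1 : (∑ i : Fin n, lam i * f i (m + 1)) = ((m : ℝ) + 2) * s0 (m + 2) := by
      have h := hDI (m + 1)
      simp only [show m + 1 + 1 = m + 2 from rfl] at h
      rw [h]
      push_cast
      ring
    have hA2 : (∑ i : Fin n, lam i * f i m) = ((m : ℝ) + 1) * s0 (m + 1) := hDI m
    have hB1 : (∑ i : Fin n, lam i ^ 2 * f i m)
        = s0 1 * s0 (m + 1) - ((m : ℝ) + 2) * s0 (m + 2) := by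
      have h := hS m
      linarith
    have hB2 : (∑ i : Fin n, lam i ^ 2 * f i (m + 1))
        = s0 1 * s0 (m + 2) - ((m : ℝ) + 3) * s0 (m + 3) := by
      have h := hS (m + 1)
      simp only [show m + 1 + 1 = m + 2 from rfl, show m + 1 + 2 = m + 3 from rfl] at h
      push_cast at h
      linarith
    have hsum : N = (∑ i : Fin n, lam i * f i (m + 1)) * (∑ j : Fin n, lam j ^ 2 * f j m)
        - (∑ i : Fin n, lam i * f i m) * (∑ j : Fin n, lam j ^ 2 * f j (m + 1)) := by
      rw [hNdef, Finset.sum_mul_sum, Finset.sum_mul_sum, ← Finset.sum_sub_distrib]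
      apply Finset.sum_congr rfl
      intro i _
      rw [← Finset.sum_sub_distrib]
      apply Finset.sum_congr rfl
      intro j _
      simp only [hFdef]
      ring
    rw [hsum, hA1, hA2, hB1, hB2]
  have hFanti : ∀ i j : Fin n, F j i = -F i j := by
    intro i j
    simp only [hFdef]
    ring
  have hN2 : (∑ i : Fin n, ∑ j : Fin n, lam j * lam i ^ 2 * F i j) = -N := by
    rw [Finset.sum_comm]
    rw [hNdef, ← Finset.sum_neg_distrib]
    apply Finset.sum_congr rfl
    intro i _
    rw [← Finset.sum_neg_distrib]
    apply Finset.sum_congr rfl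
    intro j _
    rw [hFanti i j]
    ring
  have hNsym : (∑ i : Fin n, ∑ j : Fin n, lam i * lam j * (lam j - lam i) * F i j) = 2 * N := by
    have e : (∑ i : Fin n, ∑ j : Fin n, lam i * lam j * (lam j - lam i) * F i j)
        = (∑ i : Fin n, ∑ j : Fin n, lam i * lam j ^ 2 * F i j)
          - ∑ i : Fin n, ∑ j : Fin n, lam j * lam i ^ 2 * F i j := by
      rw [← Finset.sum_sub_distrib]
      apply Finset.sum_congr rfl
      intro i _
      rw [← Finset.sum_sub_distrib]
      apply Finset.sum_congr rfl
      intro j _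
      ring
    rw [e, hN2, ← hNdef]
    ring
  have hterm : ∀ i j : Fin n, 0 ≤ lam i * lam j * (lam j - lam i) * F i j ∧
      (lam i * lam j * (lam j - lam i) * F i j = 0 → lam i = lam j) := by
    intro i j
    rcases eq_or_ne i j with rfl | hij
    · refine ⟨by simp, fun _ => rfl⟩
    · have hjmem : j ∈ (univ : Finset (Fin n)).erase i :=
        Finset.mem_erase.2 ⟨hij.symm, Finset.mem_univ j⟩
      have himem : i ∈ (univ : Finset (Fin n)).erase j :=
        Finset.mem_erase.2 ⟨hij, Finset.mem_univ i⟩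
      set T := ((univ : Finset (Fin n)).erase i).erase j with hTdef
      have hjT : j ∉ T := Finset.notMem_erase _ _
      have hTins : insert j T = (univ : Finset (Fin n)).erase i := Finset.insert_erase hjmem
      have hTcomm : ((univ : Finset (Fin n)).erase j).erase i = T := by
        rw [hTdef]
        exact Finset.erase_right_comm
      have hiT : i ∉ T := by
        rw [← hTcomm]
        exact Finset.notMem_erase _ _
      have hTins2 : insert i T = (univ : Finset (Fin n)).erase j := by
        rw [← hTcomm]
        exact Finset.insert_erase himem
      have hTcard : T.card = n - 2 := by
        rw [hTdef, Finset.card_erase_of_mem hjmem, hcerase i]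
        omega
      have hexp : ∃ D : ℝ, ESAux.E lam (insert j T) m = ESAux.E lam T m + lam j * D ∧
          ESAux.E lam (insert i T) m = ESAux.E lam T m + lam i * D ∧
          ESAux.E lam T (m + 1) * D < ESAux.E lam T m ^ 2 := by
        rcases Nat.eq_zero_or_pos m with hm0 | hm0
        · subst hm0
          refine ⟨0, ?_, ?_, ?_⟩
          · simp only [ESAux.E_zero]; ring
          · simp only [ESAux.E_zero]; ring
          · simp only [ESAux.E_zero, mul_zero]; norm_num
        · obtain ⟨m', rfl⟩ : ∃ m', m = m' + 1 := ⟨m - 1, by omega⟩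
          refine ⟨ESAux.E lam T m', ESAux.E_insert lam hjT m', ESAux.E_insert lam hiT m', ?_⟩
          have hns := ESAux.newton_strict lam hpos T m' (by rw [hTcard]; omega)
          simp only [show m' + 1 + 1 = m' + 2 from rfl]
          rw [mul_comm]
          exact hns
      obtain ⟨DT, hEj, hEi, hDnewton⟩ := hexp
      have e1 : f i (m + 1) = ESAux.E lam T (m + 1) + lam j * ESAux.E lam T m := by
        simp only [hfdef]
        rw [← hTins]
        exact ESAux.E_insert lam hjT m
      have e2 : f i m = ESAux.E lam T m + lam j * DT := by
        simp only [hfdef]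
        rw [← hTins]
        exact hEj
      have e3 : f j (m + 1) = ESAux.E lam T (m + 1) + lam i * ESAux.E lam T m := by
        simp only [hfdef]
        rw [← hTins2]
        exact ESAux.E_insert lam hiT m
      have e4 : f j m = ESAux.E lam T m + lam i * DT := by
        simp only [hfdef]
        rw [← hTins2]
        exact hEi
      have hGpos : 0 < ESAux.E lam T m ^ 2 - ESAux.E lam T (m + 1) * DT := by linarith
      have hFval : F i j = (lam j - lam i)
          * (ESAux.E lam T m ^ 2 - ESAux.E lam T (m + 1) * DT) := by
        simp only [hFdef]
        rw [e1, e2, e3, e4]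
        ring
      constructor
      · rw [hFval]
        nlinarith [mul_pos (hpos i) (hpos j), sq_nonneg (lam j - lam i),
          mul_nonneg (mul_pos (hpos i) (hpos j)).le
            (mul_nonneg (sq_nonneg (lam j - lam i)) hGpos.le)]
      · intro h0
        rw [hFval] at h0
        by_contra hne
        have hsq : 0 < (lam j - lam i) ^ 2 := by
          have : lam j - lam i ≠ 0 := sub_ne_zero.2 fun h => hne h.symm
          positivity
        nlinarith [mul_pos (mul_pos (hpos i) (hpos j)) (mul_pos hsq hGpos)]
  have hNnonneg : 0 ≤ N := by
    have h : 0 ≤ ∑ i : Fin n, ∑ j : Fin n, lam i * lam j * (lam j - lam i) * F i j :=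
      Finset.sum_nonneg fun i _ => Finset.sum_nonneg fun j _ => (hterm i j).1
    linarith
  have hXN : esymm 1 lam / (((m + 2 : ℕ) : ℝ) * (((m + 2 : ℕ) : ℝ) - 1))
      - ((m + 2 : ℕ) : ℝ) * esymm (m + 2) lam
        / ((((m + 2 : ℕ) : ℝ) - 1) * esymm (m + 2 - 1) lam)
      + (((m + 2 : ℕ) : ℝ) + 1) * esymm (m + 2 + 1) lam / (((m + 2 : ℕ) : ℝ) * esymm (m + 2) lam)
      = N / ((((m : ℝ) + 1) * s0 (m + 1)) * (((m : ℝ) + 2) * s0 (m + 2))) := by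
    have hc : ((m + 2 : ℕ) : ℝ) = (m : ℝ) + 2 := by push_cast; ring
    rw [hes1, hes2, hes3, hes4, hNval, hc]
    have hz1 : s0 (m + 1) ≠ 0 := hpm1.ne'
    have hz2 : s0 (m + 2) ≠ 0 := hpm2.ne'
    have hz3 : (m : ℝ) + 1 ≠ 0 := by positivity
    have hz4 : (m : ℝ) + 2 ≠ 0 := by positivity
    have hz5 : (m : ℝ) + 2 - 1 = (m : ℝ) + 1 := by ring
    rw [hz5]
    field_simp
    ring
  rw [hXN]
  have hdenpos : 0 < (((m : ℝ) + 1) * s0 (m + 1)) * (((m : ℝ) + 2) * s0 (m + 2)) := by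
    have h1 : (0:ℝ) < (m : ℝ) + 1 := by positivity
    have h2 : (0:ℝ) < (m : ℝ) + 2 := by positivity
    exact mul_pos (mul_pos h1 hpm1) (mul_pos h2 hpm2)
  constructor
  · exact div_nonneg hNnonneg hdenpos.le
  · rw [div_eq_zero_iff]
    constructor
    · rintro (hN0 | hd0)
      · intro i j
        have hNsym0 : (∑ i : Fin n, ∑ j : Fin n, lam i * lam j * (lam j - lam i) * F i j) = 0 := by
          rw [hNsym, hN0]; ring
        have h1 := (Finset.sum_eq_zero_iff_of_nonneg
          (fun i _ => Finset.sum_nonneg fun j _ => (hterm i j).1)).1 hNsym0 i (Finset.mem_univ i)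
        have h2 := (Finset.sum_eq_zero_iff_of_nonneg
          (fun j _ => (hterm i j).1)).1 h1 j (Finset.mem_univ j)
        exact (hterm i j).2 h2
      · exact absurd hd0 hdenpos.ne'
    · intro hall
      left
      have hNsym0 : (∑ i : Fin n, ∑ j : Fin n, lam i * lam j * (lam j - lam i) * F i j) = 0 := by
        apply Finset.sum_eq_zero
        intro i _
        apply Finset.sum_eq_zero
        intro j _
        rw [hall i j, sub_self]
        ring
      linarith [hNsym]
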